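/- Let P₁,…,Pₙ be pairwise distinct pure states on ℂ^d with n ≥ 2, let t₁,…,tₙ be positive reals and R an orthogonal projection with ∑_{j=1}^n t_j P_j = R, and set r = tr R. Then the family M(j) = (t_j/(r−1))(R − P_j) + (1/n)(I − R), j = 1,…,n, is a POVM that antidistinguishes P₁,…,Pₙ: each M(j) is positive semidefinite, ∑_j M(j) = I, P_j M(j) = 0 for every j, and ∑_{k=1}^n tr(P_k M(j)) ≠ 0 for every j. -/

import Mathlib

open Matrix BigOperators
open scoped ComplexOrder

/-- A state (density matrix) on ℂ^d: positive semidefinite (hence Hermitian) with trace 1. -/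
def IsState {d : ℕ} (ρ : Matrix (Fin d) (Fin d) ℂ) : Prop :=
  ρ.PosSemidef ∧ ρ.trace = 1

/-- A POVM with outcomes 1,…,n. -/
def IsPOVM {d n : ℕ} (M : Fin n → Matrix (Fin d) (Fin d) ℂ) : Prop :=
  (∀ j, (M j).PosSemidef) ∧ ∑ j, M j = 1

/-- States are distinguishable if some POVM identifies each with certainty. -/
def Distinguishable {d n : ℕ} (ρ : Fin n → Matrix (Fin d) (Fin d) ℂ) : Prop :=
  ∃ M : Fin n → Matrix (Fin d) (Fin d) ℂ, IsPOVM M ∧ ∀ j, (ρ j * M j).trace = 1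

/-- States are antidistinguishable if some POVM excludes each with certainty,
with every outcome occurring for at least one state. -/
def Antidistinguishable {d n : ℕ} (ρ : Fin n → Matrix (Fin d) (Fin d) ℂ) : Prop :=
  ∃ M : Fin n → Matrix (Fin d) (Fin d) ℂ, IsPOVM M ∧
    ∀ j, (ρ j * M j).trace = 0 ∧ ∑ k, (ρ k * M j).trace ≠ 0

/-- A pure state on ℂ^d: a rank-one orthogonal projection. -/
def IsPureState {d : ℕ} (P : Matrix (Fin d) (Fin d) ℂ) : Prop :=
  P.IsHermitian ∧ P * P = P ∧ P.trace = 1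

/-- Frobenius squared norm. -/
noncomputable def tc {d : ℕ} (A : Matrix (Fin d) (Fin d) ℂ) : ℝ :=
  ∑ j, ∑ i, Complex.normSq (A i j)

lemma tc_nonneg {d : ℕ} (A : Matrix (Fin d) (Fin d) ℂ) : 0 ≤ tc A :=
  Finset.sum_nonneg fun _ _ => Finset.sum_nonneg fun _ _ => Complex.normSq_nonneg _

lemma trace_AHA {d : ℕ} (A : Matrix (Fin d) (Fin d) ℂ) :
    (Aᴴ * A).trace = (tc A : ℂ) := by
  simp only [Matrix.trace, Matrix.diag, Matrix.mul_apply, Matrix.conjTranspose_apply, tc]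
  push_cast
  refine Finset.sum_congr rfl fun j _ => Finset.sum_congr rfl fun i _ => ?_
  rw [Complex.normSq_eq_conj_mul_self]; rfl

lemma tc_eq_zero {d : ℕ} {A : Matrix (Fin d) (Fin d) ℂ} (h : tc A = 0) : A = 0 := by
  ext i j
  have h1 : ∀ j' ∈ Finset.univ, (0:ℝ) ≤ ∑ i, Complex.normSq (A i j') :=
    fun _ _ => Finset.sum_nonneg fun _ _ => Complex.normSq_nonneg _
  have h2 := (Finset.sum_eq_zero_iff_of_nonneg h1).mp h j (Finset.mem_univ j)
  have h3 := (Finset.sum_eq_zero_iff_of_nonneg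
    (fun _ _ => Complex.normSq_nonneg _)).mp h2 i (Finset.mem_univ i)
  simpa using Complex.normSq_eq_zero.mp h3

lemma psd_of_proj {d : ℕ} {X : Matrix (Fin d) (Fin d) ℂ}
    (h1 : X.IsHermitian) (h2 : X * X = X) : X.PosSemidef := by
  have : X = Xᴴ * X := by rw [h1]; exact h2.symm
  rw [this]; exact Matrix.posSemidef_conjTranspose_mul_self X

lemma psd_smul {d : ℕ} {A : Matrix (Fin d) (Fin d) ℂ} (hA : A.PosSemidef)
    {c : ℝ} (hc : 0 ≤ c) : ((c:ℂ) • A).PosSemidef := by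
  constructor
  · rw [Matrix.IsHermitian, Matrix.conjTranspose_smul, hA.1]
    congr 1
    simp
  · intro x
    exact (hA.smul (a := (c:ℂ)) (by exact_mod_cast hc)).2 x

lemma pure_pair {d : ℕ} {A B : Matrix (Fin d) (Fin d) ℂ}
    (hA : IsPureState A) (hB : IsPureState B) :
    ∃ v : ℝ, (A * B).trace = (v : ℂ) ∧ 0 ≤ v ∧ v ≤ 1 ∧ (A ≠ B → v < 1) := by
  obtain ⟨hAh, hAi, hAt⟩ := hA
  obtain ⟨hBh, hBi, hBt⟩ := hB
  refine ⟨tc (B * A), ?_, tc_nonneg _, ?_, ?_⟩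
  · have h1 : (B * A)ᴴ * (B * A) = A * (B * A) := by
      rw [Matrix.conjTranspose_mul, hAh, hBh]
      rw [show A * B * (B * A) = A * ((B * B) * A) by noncomm_ring, hBi]
    have h2 : (A * (B * A)).trace = (A * B).trace := by
      rw [Matrix.trace_mul_comm, show B * A * A = B * (A * A) by noncomm_ring, hAi,
        Matrix.trace_mul_comm]
    rw [← h2, ← h1, trace_AHA]
  all_goals {
    have hd : ((tc (A - B) : ℝ) : ℂ) = 2 - 2 * (tc (B * A) : ℂ) := by
      rw [← trace_AHA]
      have hh : (A - B)ᴴ = A - B := by rw [Matrix.conjTranspose_sub, hAh, hBh]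
      have he : (A - B)ᴴ * (A - B) = A + B - (A * B + B * A) := by
        rw [hh]; rw [show (A - B) * (A - B) = A * A + B * B - (A * B + B * A) by noncomm_ring,
          hAi, hBi]
      have hab : (A * B).trace = (tc (B * A) : ℂ) := by
        have h1 : (B * A)ᴴ * (B * A) = A * (B * A) := by
          rw [Matrix.conjTranspose_mul, hAh, hBh]
          rw [show A * B * (B * A) = A * ((B * B) * A) by noncomm_ring, hBi]
        have h2 : (A * (B * A)).trace = (A * B).trace := by
          rw [Matrix.trace_mul_comm, show B * A * A = B * (A * A) by noncomm_ring, hAi,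
            Matrix.trace_mul_comm]
        rw [← h2, ← h1, trace_AHA]
      rw [he, Matrix.trace_sub, Matrix.trace_add, Matrix.trace_add, hAt, hBt, hab,
        Matrix.trace_mul_comm B A, hab]
      ring
    have hdr : tc (A - B) = 2 - 2 * tc (B * A) := by exact_mod_cast hd
    first
    | nlinarith [tc_nonneg (A - B)]
    | { intro hne
        have h0 : tc (A - B) ≠ 0 := fun h => hne (sub_eq_zero.mp (tc_eq_zero h))
        have hpos : 0 < tc (A - B) := lt_of_le_of_ne (tc_nonneg _) (Ne.symm h0)
        nlinarith }
  }

/-- explicit antidistinguishing POVM M(j) = (t_j/(r−1))(R − P_j) + (1/n)(I − R),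
where r = tr R, for pure states with ∑ t_j P_j = R a projection. -/
theorem explicit_antidistinguishing_povm {d n : ℕ} (hn : 2 ≤ n)
    (P : Fin n → Matrix (Fin d) (Fin d) ℂ) (hP : ∀ j, IsPureState (P j))
    (hinj : Function.Injective P) (t : Fin n → ℝ) (ht : ∀ j, 0 < t j)
    (R : Matrix (Fin d) (Fin d) ℂ) (hR : R.IsHermitian ∧ R * R = R)
    (hsum : ∑ j, (t j : ℂ) • P j = R)
    (r : ℂ) (hr : r = R.trace)
    (M : Fin n → Matrix (Fin d) (Fin d) ℂ)
    (hM : ∀ j, M j = ((t j : ℂ) / (r - 1)) • (R - P j) + ((n : ℂ)⁻¹) • (1 - R)) :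
    IsPOVM M ∧ (∀ j, P j * M j = 0) ∧ ∀ j, ∑ k, (P k * M j).trace ≠ 0 := by
  obtain ⟨hRh, hRi⟩ := hR
  set X : Matrix (Fin d) (Fin d) ℂ := 1 - R with hX
  have hXh : Xᴴ = X := by rw [hX, Matrix.conjTranspose_sub, Matrix.conjTranspose_one, hRh]
  -- Step A: P j * X = 0, i.e. P j * R = P j, and R * P j = P j
  have hRX : R * X = 0 := by rw [hX, mul_sub, mul_one, hRi, sub_self]
  have key : ∀ j, (P j * X)ᴴ * (P j * X) = X * (P j * X) := by
    intro j
    calc (P j * X)ᴴ * (P j * X) = (X * P j) * (P j * X) := by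
          rw [Matrix.conjTranspose_mul, hXh, (hP j).1]
      _ = X * ((P j * P j) * X) := by noncomm_ring
      _ = X * (P j * X) := by rw [(hP j).2.1]
  have hsum2 : ∑ j, (t j:ℂ) • ((P j * X)ᴴ * (P j * X)) = 0 := by
    calc ∑ j, (t j:ℂ) • ((P j * X)ᴴ * (P j * X))
        = ∑ j, (t j:ℂ) • (X * (P j * X)) := by simp_rw [key]
      _ = X * ((∑ j, (t j:ℂ) • P j) * X) := by
          rw [Matrix.sum_mul, Matrix.mul_sum]
          simp_rw [Matrix.smul_mul, Matrix.mul_smul]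
      _ = X * (R * X) := by rw [hsum]
      _ = 0 := by rw [hRX, mul_zero]
  have htr : ∑ j, (t j:ℂ) * (tc (P j * X):ℂ) = 0 := by
    calc ∑ j, (t j:ℂ) * (tc (P j * X):ℂ)
        = (∑ j, (t j:ℂ) • ((P j * X)ᴴ * (P j * X))).trace := by
          rw [Matrix.trace_sum]
          simp_rw [Matrix.trace_smul, trace_AHA, smul_eq_mul]
      _ = 0 := by rw [hsum2, Matrix.trace_zero]
  have htr' : ∑ j, t j * tc (P j * X) = 0 := by exact_mod_cast htr
  have hPX : ∀ j, P j * X = 0 := by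
    intro j
    have h1 := (Finset.sum_eq_zero_iff_of_nonneg
      (fun k _ => mul_nonneg (ht k).le (tc_nonneg _))).mp htr' j (Finset.mem_univ j)
    exact tc_eq_zero (by
      rcases mul_eq_zero.mp h1 with h | h
      · exact absurd h (ht j).ne'
      · exact h)
  have hPR : ∀ j, P j * R = P j := by
    intro j
    have := hPX j
    rw [hX, mul_sub, mul_one, sub_eq_zero] at this
    exact this.symm
  have hRP : ∀ j, R * P j = P j := by
    intro j
    have := congrArg Matrix.conjTranspose (hPR j)
    rwa [Matrix.conjTranspose_mul, hRh, (hP j).1] at this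
  -- Step B: r is real, equal to ∑ t j
  have hrr : r = ((∑ j, t j : ℝ) : ℂ) := by
    rw [hr, ← hsum, Matrix.trace_sum]
    simp_rw [Matrix.trace_smul, smul_eq_mul]
    push_cast
    refine Finset.sum_congr rfl fun j _ => ?_
    rw [(hP j).2.2, mul_one]
  set rr : ℝ := ∑ j, t j with hrrdef
  -- Step C: 1 < rr
  have hj0 : (0 : ℕ) < n := by omega
  have hj1 : (1 : ℕ) < n := by omega
  have hone_lt : 1 < rr := by
    set j0 : Fin n := ⟨0, hj0⟩
    set k1 : Fin n := ⟨1, hj1⟩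
    choose v hv1 hv2 hv3 hv4 using fun k => pure_pair (hP j0) (hP k)
    have h1 : (P j0 * R).trace = 1 := by rw [hPR j0, (hP j0).2.2]
    have h2 : (P j0 * R).trace = ∑ k, (t k:ℂ) * (v k:ℂ) := by
      rw [← hsum, Matrix.mul_sum, Matrix.trace_sum]
      simp_rw [Matrix.mul_smul, Matrix.trace_smul, smul_eq_mul, hv1]
    have h3 : ∑ k, t k * v k = 1 := by
      have : ((∑ k, t k * v k : ℝ) : ℂ) = 1 := by push_cast; rw [← h2, h1]
      exact_mod_cast this
    have hne : P j0 ≠ P k1 := fun h => absurd (hinj h) (by simp [j0, k1, Fin.ext_iff])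
    have hlt : ∑ k, t k * v k < ∑ k, t k := by
      refine Finset.sum_lt_sum (fun k _ => ?_) ⟨k1, Finset.mem_univ _, ?_⟩
      · nlinarith [(ht k).le, hv3 k, hv2 k]
      · nlinarith [ht k1, hv4 k1 hne]
    rw [h3] at hlt
    exact hlt
  have hrne : r - 1 ≠ 0 := by
    rw [hrr]
    intro h
    have : ((rr - 1 : ℝ) : ℂ) = 0 := by push_cast; exact h
    have : rr - 1 = 0 := by exact_mod_cast this
    linarith
  have hcoeff : ∀ j, (t j : ℂ) / (r - 1) = ((t j / (rr - 1) : ℝ) : ℂ) := by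
    intro j
    rw [hrr]
    push_cast
    ring
  have hcoeffpos : ∀ j, 0 < t j / (rr - 1) := fun j => div_pos (ht j) (by linarith)
  have hnC : (n : ℂ) ≠ 0 := Nat.cast_ne_zero.mpr (by omega)
  -- projections R - P j and 1 - R
  have hRPj_herm : ∀ j, (R - P j).IsHermitian := fun j => hRh.sub (hP j).1
  have hRPj_idem : ∀ j, (R - P j) * (R - P j) = R - P j := by
    intro j
    rw [sub_mul, mul_sub, mul_sub, hRi, hPR j, hRP j, (hP j).2.1]
    abel
  have hXherm : (1 - R : Matrix (Fin d) (Fin d) ℂ).IsHermitian :=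
    Matrix.isHermitian_one.sub hRh
  have hXidem : (1 - R : Matrix (Fin d) (Fin d) ℂ) * (1 - R) = 1 - R := by
    rw [sub_mul, one_mul, mul_sub, mul_one, hRi]
    abel
  refine ⟨⟨?_, ?_⟩, ?_, ?_⟩
  · -- positivity
    intro j
    rw [hM j, hcoeff j]
    refine Matrix.PosSemidef.add (psd_smul (psd_of_proj (hRPj_herm j) (hRPj_idem j))
      (hcoeffpos j).le) ?_
    have : ((n : ℂ))⁻¹ = (((n : ℝ)⁻¹ : ℝ) : ℂ) := by push_cast; ring
    rw [this]
    exact psd_smul (psd_of_proj hXherm hXidem) (by positivity)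
  · -- sum = 1
    have hsplit : ∑ j, M j = (∑ j, ((t j : ℂ) / (r - 1)) • (R - P j)) +
        (∑ _j : Fin n, ((n : ℂ)⁻¹) • (1 - R)) := by
      simp_rw [hM]
      rw [Finset.sum_add_distrib]
    rw [hsplit]
    have h2nd : (∑ _j : Fin n, ((n : ℂ)⁻¹) • (1 - R : Matrix (Fin d) (Fin d) ℂ)) = 1 - R := by
      rw [Finset.sum_const, Finset.card_univ, Fintype.card_fin, ← Nat.cast_smul_eq_nsmul ℂ,
        smul_smul, mul_inv_cancel₀ hnC, one_smul]
    have h1st : (∑ j, ((t j : ℂ) / (r - 1)) • (R - P j)) = R := by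
      have : ∀ j, ((t j : ℂ) / (r - 1)) • (R - P j) = (r - 1)⁻¹ • ((t j : ℂ) • (R - P j)) := by
        intro j
        rw [smul_smul, div_eq_mul_inv, mul_comm]
      simp_rw [this]
      rw [← Finset.smul_sum]
      have hs : ∑ j, (t j : ℂ) • (R - P j) = (r - 1) • R := by
        simp_rw [smul_sub]
        rw [Finset.sum_sub_distrib, hsum, ← Finset.sum_smul]
        have : (∑ j, (t j : ℂ)) = r := by rw [hrr, hrrdef]; push_cast; rfl
        rw [this, sub_smul, one_smul]
      rw [hs, smul_smul, inv_mul_cancel₀ hrne, one_smul]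
    rw [h1st, h2nd]
    abel
  · -- P j * M j = 0
    intro j
    rw [hM j, mul_add, Matrix.mul_smul, Matrix.mul_smul]
    have e1 : P j * (R - P j) = 0 := by rw [mul_sub, hPR j, (hP j).2.1, sub_self]
    have e2 : P j * (1 - R) = 0 := hPX j
    rw [e1, e2, smul_zero, smul_zero, add_zero]
  · -- nonvanishing
    intro j
    choose w hw1 hw2 hw3 hw4 using fun k => pure_pair (hP k) (hP j)
    have htrace : ∀ k, (P k * M j).trace = ((t j : ℂ) / (r - 1)) * (1 - (w k : ℂ)) := by
      intro k
      rw [hM j, mul_add, Matrix.trace_add, Matrix.mul_smul, Matrix.mul_smul,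
        Matrix.trace_smul, Matrix.trace_smul, smul_eq_mul, smul_eq_mul]
      have e2 : P k * (1 - R) = 0 := hPX k
      have e1 : (P k * (R - P j)).trace = 1 - (w k : ℂ) := by
        rw [mul_sub, Matrix.trace_sub, hPR k, (hP k).2.2, hw1]
      rw [e1, e2, Matrix.trace_zero, mul_zero, add_zero]
    simp_rw [htrace]
    rw [← Finset.mul_sum]
    refine mul_ne_zero (div_ne_zero (Complex.ofReal_ne_zero.mpr (ht j).ne') hrne) ?_
    have hcast : (∑ k, (1 - (w k : ℂ))) = (((n : ℝ) - ∑ k, w k : ℝ) : ℂ) := by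
      push_cast
      rw [Finset.sum_sub_distrib]
      simp
    rw [hcast]
    refine Complex.ofReal_ne_zero.mpr ?_
    have : Nontrivial (Fin n) := Fin.nontrivial_iff_two_le.mpr hn
    obtain ⟨k1, hk1⟩ := exists_ne j
    have hne : P k1 ≠ P j := fun h => hk1 (hinj h)
    have hlt : ∑ k, w k < ∑ _k : Fin n, (1:ℝ) := by
      refine Finset.sum_lt_sum (fun k _ => hw3 k) ⟨k1, Finset.mem_univ _, hw4 k1 hne⟩
    rw [Finset.sum_const, Finset.card_univ, Fintype.card_fin, nsmul_eq_mul, mul_one] at hlt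
    intro h
    linarith
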